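/- Let k ≥ 1 be an integer, ε > 0, m = (1/2)·Σ_{i,j} |A_{ij}| (the number of edges of the signed graph), h = (I + L)^{−1}·𝟙 where 𝟙 is the all-ones vector, and δ = ε/(4k·√(n + 4m)). If h̄ ∈ ℝ^n satisfies ‖h̄ − h‖_{I+L} ≤ δ·‖h‖_{I+L}, then |h_i − h̄_i| ≤ ε/(4k) for every index i. -/

import Mathlib

open Matrix

/-- The norm of a vector `x` with respect to a matrix `K`: `‖x‖_K = √(xᵀ K x)`. -/
noncomputable def matNorm {m : Type*} [Fintype m] (K : Matrix m m ℝ) (x : m → ℝ) : ℝ :=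
  Real.sqrt (x ⬝ᵥ K *ᵥ x)

theorem stmt_17 (n : ℕ) (hn : 1 ≤ n) (A : Matrix (Fin n) (Fin n) ℝ)
    (hAsymm : A.IsSymm) (hAdiag : ∀ i, A i i = 0)
    (hAval : ∀ i j, A i j = -1 ∨ A i j = 0 ∨ A i j = 1)
    (D L : Matrix (Fin n) (Fin n) ℝ)
    (hD : D = Matrix.diagonal fun i => ∑ j, |A i j|)
    (hL : L = D - A)
    (k : ℕ) (hk : 1 ≤ k) (ε : ℝ) (hε : 0 < ε)
    (m : ℝ) (hm : m = (1 / 2) * ∑ i, ∑ j, |A i j|)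
    (h : Fin n → ℝ) (hh : h = (1 + L)⁻¹ *ᵥ (fun _ => 1))
    (δ : ℝ) (hδ : δ = ε / (4 * k * Real.sqrt (n + 4 * m)))
    (hbar : Fin n → ℝ)
    (hhb : matNorm (1 + L) (hbar - h) ≤ δ * matNorm (1 + L) h) :
    ∀ i, |h i - hbar i| ≤ ε / (4 * k) := by
  -- L has a nonnegative quadratic form
  have hLq : ∀ x : Fin n → ℝ, 0 ≤ x ⬝ᵥ L *ᵥ x := by
    intro x
    have hx : x ⬝ᵥ L *ᵥ x
        = (∑ i, ∑ j, |A i j| * x i ^ 2) - ∑ i, ∑ j, A i j * (x i * x j) := by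
      rw [hL, hD, sub_mulVec, dotProduct_sub]
      congr 1
      · simp only [dotProduct, mulVec_diagonal, Finset.mul_sum, Finset.sum_mul]
        refine Finset.sum_congr rfl fun i _ => Finset.sum_congr rfl fun j _ => by ring
      · simp only [dotProduct, mulVec, Finset.mul_sum]
        refine Finset.sum_congr rfl fun i _ => Finset.sum_congr rfl fun j _ => by ring
    have hswap : ∑ i, ∑ j, |A i j| * x i ^ 2 = ∑ i, ∑ j, |A i j| * x j ^ 2 := by
      rw [Finset.sum_comm]
      refine Finset.sum_congr rfl fun i _ => Finset.sum_congr rfl fun j _ => ?_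
      rw [hAsymm.apply i j]
    have termwise : ∀ i j : Fin n, 2 * (A i j * (x i * x j))
        ≤ |A i j| * x i ^ 2 + |A i j| * x j ^ 2 := by
      intro i j
      have h1 : A i j * (x i * x j) ≤ |A i j| * (|x i| * |x j|) := by
        calc A i j * (x i * x j) ≤ |A i j * (x i * x j)| := le_abs_self _
          _ = |A i j| * (|x i| * |x j|) := by rw [abs_mul, abs_mul]
      nlinarith [abs_nonneg (A i j), sq_abs (x i), sq_abs (x j),
        sq_nonneg (|x i| - |x j|)]
    have h2 : 2 * ∑ i, ∑ j, A i j * (x i * x j)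
        ≤ 2 * ∑ i, ∑ j, |A i j| * x i ^ 2 := by
      calc 2 * ∑ i, ∑ j, A i j * (x i * x j)
          = ∑ i, ∑ j, 2 * (A i j * (x i * x j)) := by
            simp [Finset.mul_sum]
        _ ≤ ∑ i, ∑ j, (|A i j| * x i ^ 2 + |A i j| * x j ^ 2) := by
            refine Finset.sum_le_sum fun i _ => Finset.sum_le_sum fun j _ => termwise i j
        _ = (∑ i, ∑ j, |A i j| * x i ^ 2) + ∑ i, ∑ j, |A i j| * x j ^ 2 := by
            simp [Finset.sum_add_distrib]
        _ = 2 * ∑ i, ∑ j, |A i j| * x i ^ 2 := by rw [← hswap]; ring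
    rw [hx]
    linarith
  -- quadratic form of 1 + L dominates the plain dot product
  have hIL : ∀ x : Fin n → ℝ, x ⬝ᵥ x ≤ x ⬝ᵥ (1 + L) *ᵥ x := by
    intro x
    rw [add_mulVec, one_mulVec, dotProduct_add]
    linarith [hLq x]
  have hdotnn : ∀ x : Fin n → ℝ, 0 ≤ x ⬝ᵥ x := fun x =>
    Finset.sum_nonneg fun i _ => mul_self_nonneg _
  -- 1 + L is positive definite
  have herm : (1 + L).IsHermitian := by
    have hsym : (1 + L).IsSymm := by
      rw [Matrix.IsSymm, transpose_add, transpose_one, hL, hD, transpose_sub,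
        diagonal_transpose, hAsymm]
    rw [Matrix.IsHermitian]
    ext i j
    simp [conjTranspose_apply]
    exact congrFun (congrFun hsym i) j
  have hpd : (1 + L).PosDef := by
    refine posDef_iff_dotProduct_mulVec.mpr ⟨herm, fun x hx => ?_⟩
    have hxx : 0 < x ⬝ᵥ x := by
      rcases lt_or_eq_of_le (hdotnn x) with h' | h'
      · exact h'
      · exact absurd (dotProduct_self_eq_zero.mp h'.symm) hx
    have := hIL x
    simpa using lt_of_lt_of_le hxx this
  have hdet : IsUnit (1 + L).det := isUnit_iff_ne_zero.mpr hpd.det_pos.ne'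
  have hILh : (1 + L) *ᵥ h = fun _ => 1 := by
    rw [hh, mulVec_mulVec, Matrix.mul_nonsing_inv _ hdet, one_mulVec]
  -- bound on the K-norm of h
  have hQ1 : h ⬝ᵥ (1 + L) *ᵥ h = ∑ i, h i := by
    rw [hILh]; simp [dotProduct]
  have hQnn : 0 ≤ h ⬝ᵥ (1 + L) *ᵥ h := le_trans (hdotnn h) (hIL h)
  have hCS : (∑ i, h i) ^ 2 ≤ (∑ i, h i * h i) * n := by
    have := Finset.sum_mul_sq_le_sq_mul_sq Finset.univ h (fun _ => (1 : ℝ))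
    simpa [sq] using this
  have hQle : h ⬝ᵥ (1 + L) *ᵥ h ≤ (n : ℝ) := by
    have hdd : h ⬝ᵥ h = ∑ i, h i * h i := rfl
    have h1 : (h ⬝ᵥ (1 + L) *ᵥ h) ^ 2 ≤ (h ⬝ᵥ (1 + L) *ᵥ h) * n := by
      calc (h ⬝ᵥ (1 + L) *ᵥ h) ^ 2 = (∑ i, h i) ^ 2 := by rw [hQ1]
        _ ≤ (∑ i, h i * h i) * n := hCS
        _ ≤ (h ⬝ᵥ (1 + L) *ᵥ h) * n := by
            have h3 : (∑ i, h i * h i) ≤ h ⬝ᵥ (1 + L) *ᵥ h := hIL h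
            exact mul_le_mul_of_nonneg_right h3 (Nat.cast_nonneg n)
    have hn1 : (1 : ℝ) ≤ (n : ℝ) := by exact_mod_cast hn
    nlinarith [hQnn]
  have hmnn : 0 ≤ m := by
    rw [hm]
    positivity
  have hnm : (1 : ℝ) ≤ (n : ℝ) + 4 * m := by
    have hn1 : (1 : ℝ) ≤ (n : ℝ) := by exact_mod_cast hn
    linarith
  have hs : 0 < Real.sqrt ((n : ℝ) + 4 * m) := Real.sqrt_pos.mpr (by linarith)
  have hnormh : matNorm (1 + L) h ≤ Real.sqrt ((n : ℝ) + 4 * m) := by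
    unfold matNorm
    exact Real.sqrt_le_sqrt (by linarith)
  have hk1 : (1 : ℝ) ≤ (k : ℝ) := by exact_mod_cast hk
  have hδnn : 0 ≤ δ := by
    rw [hδ]
    positivity
  intro i
  set v := hbar - h with hv
  have hvi : |h i - hbar i| = |v i| := by
    rw [hv]
    simp [abs_sub_comm]
  have h1 : |v i| ≤ matNorm (1 + L) v := by
    have hsum : (v i) ^ 2 ≤ v ⬝ᵥ v := by
      have : (v i) * (v i) ≤ ∑ j, v j * v j :=
        Finset.single_le_sum (fun j _ => mul_self_nonneg (v j)) (Finset.mem_univ i)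
      calc (v i) ^ 2 = v i * v i := sq _
        _ ≤ v ⬝ᵥ v := this
    calc |v i| = Real.sqrt ((v i) ^ 2) := (Real.sqrt_sq_eq_abs _).symm
      _ ≤ Real.sqrt (v ⬝ᵥ (1 + L) *ᵥ v) :=
          Real.sqrt_le_sqrt (le_trans hsum (hIL v))
  calc |h i - hbar i| = |v i| := hvi
    _ ≤ matNorm (1 + L) v := h1
    _ ≤ δ * matNorm (1 + L) h := hhb
    _ ≤ δ * Real.sqrt ((n : ℝ) + 4 * m) := by gcongr
    _ = ε / (4 * k) := by
        rw [hδ]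
        field_simp
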